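/- If f : Set α → Set α distributes over arbitrary unions of nonempty index families (f (⋃ i, A i) = ⋃ i, f (A i) for any nonempty index type) and f ∅ ≠ ∅, then X := ⋃ n : ℕ, f^[n+1] ∅ is a fixed point of f, i.e., f X = X. -/
import Mathlib


theorem stmt_12 {α : Type*} (f : Set α → Set α)
    (hdist : ∀ (ι : Type) [Nonempty ι] (A : ι → Set α), f (⋃ i, A i) = ⋃ i, f (A i))
    (hnull : f ∅ ≠ ∅) :
    f (⋃ n : ℕ, f^[n + 1] ∅) = ⋃ n : ℕ, f^[n + 1] ∅ := by
  have hmono : ∀ A B : Set α, A ⊆ B → f A ⊆ f B := by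
    intro A B hAB
    have h := hdist Bool (fun b => if b then B else A)
    have hu : (⋃ b : Bool, if b then B else A) = B := by
      apply subset_antisymm
      · apply Set.iUnion_subset; intro b; cases b <;> simp [hAB]
      · simpa using Set.subset_iUnion (fun b : Bool => if b then B else A) true
    rw [hu] at h
    rw [h]
    exact Set.subset_iUnion (fun b : Bool => f (if b then B else A)) false
  have hchain : ∀ n : ℕ, f^[n] ∅ ⊆ f^[n + 1] ∅ := by
    intro n
    induction n with
    | zero => simp
    | succ k ih =>
      rw [Function.iterate_succ_apply', Function.iterate_succ_apply']
      exact hmono _ _ ih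
  rw [hdist ℕ]
  apply subset_antisymm
  · apply Set.iUnion_subset
    intro n
    rw [← Function.iterate_succ_apply' f (n+1) ∅]
    exact Set.subset_iUnion (fun n : ℕ => f^[n + 1] ∅) (n + 1)
  · apply Set.iUnion_subset
    intro n
    have := hchain (n + 1)
    rw [Function.iterate_succ_apply' f (n+1)] at this
    exact this.trans (Set.subset_iUnion (fun n : ℕ => f (f^[n + 1] ∅)) n)
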